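/- If S is a set of n points in general position whose convex hull is a triangle with vertices p, q, r, then by rotating a ray around each of p, q, r one finds that S has exactly three 0-edges and, for every 1 ≤ j < (n-2)/2, exactly six j-edges incident to p, q, or r; hence the number of (≤k)-edges of S incident to a convex hull vertex is exactly 3 + 6k for 1 ≤ k < (n-2)/2. -/

import Mathlib

open Finset
open scoped Classical

abbrev Pt : Type := ℝ × ℝ

/-- Twice the signed area of the triangle `a b c`; its sign is the orientation. -/
noncomputable def det3 (a b c : Pt) : ℝ :=
  (b.1 - a.1) * (c.2 - a.2) - (b.2 - a.2) * (c.1 - a.1)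

/-- `S` is in general position: no three of its points are collinear. -/
def GenPos (S : Finset Pt) : Prop :=
  ∀ a ∈ S, ∀ b ∈ S, ∀ c ∈ S, a ≠ b → a ≠ c → b ≠ c → det3 a b c ≠ 0

/-- A finite point set is in convex position. -/
def ConvexPos (Q : Finset Pt) : Prop :=
  ∀ x ∈ Q, x ∉ convexHull ℝ (↑(Q.erase x) : Set Pt)

/-- `crN S` : the number of 4-element subsets of `S` in convex position. -/
noncomputable def crN (S : Finset Pt) : ℕ :=
  ((S.powersetCard 4).filter ConvexPos).card

/-- Number of points of `S` strictly to the left of the directed line `p → q`. -/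
noncomputable def sideCount (S : Finset Pt) (p q : Pt) : ℕ :=
  (S.filter (fun x => 0 < det3 p q x)).card

/-- `{p, q}` is a `j`-edge of `S`: exactly `j` points of `S` lie in one of the open
half-planes bounded by the line through `p` and `q`. -/
def IsJEdge (S : Finset Pt) (j : ℕ) (p q : Pt) : Prop :=
  p ∈ S ∧ q ∈ S ∧ p ≠ q ∧ (sideCount S p q = j ∨ sideCount S q p = j)

/-- `ej S j` : the number of (unordered) `j`-edges of `S`. -/
noncomputable def ej (S : Finset Pt) (j : ℕ) : ℕ :=
  ((S.powersetCard 2).filter (fun e => ∃ p q : Pt, e = {p, q} ∧ IsJEdge S j p q)).card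

/-- `Ek S k` : the number of `(≤ k)`-edges of `S`. -/
noncomputable def Ek (S : Finset Pt) (k : ℕ) : ℕ :=
  ((S.powersetCard 2).filter
    (fun e => ∃ p q : Pt, e = {p, q} ∧ ∃ j ≤ k, IsJEdge S j p q)).card

/-- The vertices of the convex hull of `S` (its extreme points). -/
noncomputable def hullVertices (S : Finset Pt) : Finset Pt :=
  S.filter (fun x => x ∉ convexHull ℝ (↑(S.erase x) : Set Pt))

/-- Number of `j`-edges of `S` incident to some point of `A`. -/
noncomputable def ejInc (S A : Finset Pt) (j : ℕ) : ℕ :=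
  ((S.powersetCard 2).filter
    (fun e => (∃ p q : Pt, e = {p, q} ∧ IsJEdge S j p q) ∧ (e ∩ A).Nonempty)).card

lemma det3_swap12 (a b c : Pt) : det3 b a c = - det3 a b c := by unfold det3; ring
lemma det3_swap23 (a b c : Pt) : det3 a c b = - det3 a b c := by unfold det3; ring
lemma det3_self2 (a c : Pt) : det3 a a c = 0 := by unfold det3; ring
lemma det3_self3 (a b : Pt) : det3 a b b = 0 := by unfold det3; ring
lemma det3_self3' (a b : Pt) : det3 a b a = 0 := by unfold det3; ring

lemma sep (S : Finset Pt) (v : Pt) (hv : v ∈ hullVertices S) :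
    ∃ A B : ℝ, ∀ x ∈ S.erase v, 0 < A * (x.1 - v.1) + B * (x.2 - v.2) := by
  rw [hullVertices, mem_filter] at hv
  obtain ⟨hvS, hnot⟩ := hv
  obtain ⟨f, u, hfv, hfx⟩ := geometric_hahn_banach_point_closed
    (convex_convexHull ℝ _) ((S.erase v).finite_toSet.isClosed_convexHull (𝕜 := ℝ)) hnot
  refine ⟨f (1, 0), f (0, 1), fun x hx => ?_⟩
  have h1 : u < f x := hfx x (subset_convexHull ℝ _ (by exact_mod_cast hx))
  have hdec : ∀ y : Pt, f y = f (1,0) * y.1 + f (0,1) * y.2 := by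
    intro y
    calc f y = f (y.1 • ((1:ℝ), (0:ℝ)) + y.2 • ((0:ℝ), (1:ℝ))) := by
          congr 1; ext <;> simp
      _ = f (1,0) * y.1 + f (0,1) * y.2 := by
          rw [map_add, map_smul, map_smul]; simp [mul_comm]
  have := hdec x; have := hdec v
  nlinarith [hfv, h1]

lemma det_trans {A B : ℝ} {a b c : Pt}
    (ha : 0 < A * a.1 + B * a.2) (hb : 0 < A * b.1 + B * b.2) (hc : 0 < A * c.1 + B * c.2)
    (h1 : 0 < a.1 * b.2 - a.2 * b.1) (h2 : 0 < b.1 * c.2 - b.2 * c.1) :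
    0 < a.1 * c.2 - a.2 * c.1 := by
  nlinarith [mul_pos hc h1, mul_pos h2 ha]

lemma vertexStruct (S : Finset Pt) (hgp : GenPos S) (v : Pt) (hv : v ∈ hullVertices S) :
    (∀ x ∈ S.erase v, sideCount S v x + sideCount S x v = S.card - 2) ∧
    (∀ x ∈ S.erase v, ∀ y ∈ S.erase v, sideCount S v x = sideCount S v y → x = y) ∧
    (∀ j, j < S.card - 1 → ∃ x ∈ S.erase v, sideCount S v x = j) := by
  have hvS : v ∈ S := (mem_filter.1 hv).1
  obtain ⟨A, B, hl⟩ := sep S v hv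
  set T := S.erase v with hT
  -- rewrite sideCount as a count over T
  have hsc : ∀ x : Pt, sideCount S v x = (T.filter (fun y => 0 < det3 v x y)).card := by
    intro x
    rw [sideCount]
    conv_lhs => rw [← insert_erase hvS]
    rw [filter_insert, if_neg (by simp [det3_self3'])]
  have hsc' : ∀ x : Pt, sideCount S x v = (T.filter (fun y => 0 < det3 x v y)).card := by
    intro x
    rw [sideCount]
    conv_lhs => rw [← insert_erase hvS]
    rw [filter_insert, if_neg (by simp [det3_self3])]
  have hTmem : ∀ x ∈ T, x ∈ S ∧ x ≠ v := by
    intro x hx; exact ⟨mem_of_mem_erase hx, (mem_erase.1 hx).1⟩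
  -- nonvanishing
  have hnz : ∀ x ∈ T, ∀ y ∈ T, x ≠ y → det3 v x y ≠ 0 := by
    intro x hx y hy hxy
    exact hgp v hvS x (hTmem x hx).1 y (hTmem y hy).1 (Ne.symm (hTmem x hx).2)
      (Ne.symm (hTmem y hy).2) hxy
  have htri : ∀ x ∈ T, ∀ y ∈ T, x ≠ y → 0 < det3 v x y ∨ 0 < det3 v y x := by
    intro x hx y hy hxy
    have h := hnz x hx y hy hxy
    have : det3 v y x = - det3 v x y := det3_swap23 v x y
    rcases lt_or_gt_of_ne h with h' | h'
    · right; linarith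
    · left; exact h'
  have htrans : ∀ x ∈ T, ∀ y ∈ T, ∀ z ∈ T,
      0 < det3 v x y → 0 < det3 v y z → 0 < det3 v x z := by
    intro x hx y hy z hz h1 h2
    have := det_trans (A := A) (B := B)
      (a := (x.1 - v.1, x.2 - v.2)) (b := (y.1 - v.1, y.2 - v.2)) (c := (z.1 - v.1, z.2 - v.2))
      (hl x hx) (hl y hy) (hl z hz)
      (by unfold det3 at h1; simpa using (by linarith [h1] : (0:ℝ) < (x.1-v.1)*(y.2-v.2) - (x.2-v.2)*(y.1-v.1)))
      (by unfold det3 at h2; simpa using (by linarith [h2] : (0:ℝ) < (y.1-v.1)*(z.2-v.2) - (y.2-v.2)*(z.1-v.1)))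
    unfold det3; simpa using this
  -- strict monotonicity of the count along the angular order
  have hmono : ∀ x ∈ T, ∀ y ∈ T, 0 < det3 v x y → sideCount S v y < sideCount S v x := by
    intro x hx y hy hxy
    rw [hsc, hsc]
    have hyx : y ∉ T.filter (fun z => 0 < det3 v y z) := by simp [det3_self3]
    have hsub : insert y (T.filter (fun z => 0 < det3 v y z)) ⊆
        T.filter (fun z => 0 < det3 v x z) := by
      intro z hz
      rcases mem_insert.1 hz with rfl | hz'
      · exact mem_filter.2 ⟨hy, hxy⟩
      · obtain ⟨hzT, hzp⟩ := mem_filter.1 hz'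
        exact mem_filter.2 ⟨hzT, htrans x hx y hy z hzT hxy hzp⟩
    calc (T.filter (fun z => 0 < det3 v y z)).card
        < (insert y (T.filter (fun z => 0 < det3 v y z))).card := by
          rw [card_insert_of_notMem hyx]; omega
      _ ≤ _ := card_le_card hsub
  have hinj : ∀ x ∈ T, ∀ y ∈ T, sideCount S v x = sideCount S v y → x = y := by
    intro x hx y hy hxy
    by_contra hne
    rcases htri x hx y hy hne with h | h
    · exact absurd hxy (by have := hmono x hx y hy h; omega)
    · exact absurd hxy (by have := hmono y hy x hx h; omega)
  have hub : ∀ x ∈ T, sideCount S v x < T.card := by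
    intro x hx
    rw [hsc]
    have hsub : T.filter (fun y => 0 < det3 v x y) ⊆ T.erase x := by
      intro z hz
      obtain ⟨hzT, hzp⟩ := mem_filter.1 hz
      refine mem_erase.2 ⟨?_, hzT⟩
      rintro rfl
      simp [det3_self3] at hzp
    calc (T.filter (fun y => 0 < det3 v x y)).card ≤ (T.erase x).card := card_le_card hsub
      _ = T.card - 1 := card_erase_of_mem hx
      _ < T.card := by have := card_pos.2 ⟨x, hx⟩; omega
  have hTcard : T.card = S.card - 1 := card_erase_of_mem hvS
  have himg : T.image (fun x => sideCount S v x) = range T.card := by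
    apply eq_of_subset_of_card_le
    · intro j hj
      obtain ⟨x, hx, rfl⟩ := mem_image.1 hj
      exact mem_range.2 (hub x hx)
    · rw [card_range, card_image_of_injOn hinj]
  refine ⟨?_, hinj, ?_⟩
  · intro x hx
    rw [hsc, hsc']
    set U := T.erase x with hU
    have hxe : x ∉ T.filter (fun y => 0 < det3 v x y) := by simp [det3_self3]
    have hxe' : x ∉ T.filter (fun y => 0 < det3 x v y) := by simp [det3_self3']
    have e1 : T.filter (fun y => 0 < det3 v x y) = U.filter (fun y => 0 < det3 v x y) := by
      ext z
      simp only [hU, mem_filter, mem_erase]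
      constructor
      · rintro ⟨hzT, hzp⟩
        refine ⟨⟨?_, hzT⟩, hzp⟩
        rintro rfl; simp [det3_self3] at hzp
      · rintro ⟨⟨_, hzT⟩, hzp⟩; exact ⟨hzT, hzp⟩
    have e2 : T.filter (fun y => 0 < det3 x v y) = U.filter (fun y => 0 < det3 x v y) := by
      ext z
      simp only [hU, mem_filter, mem_erase]
      constructor
      · rintro ⟨hzT, hzp⟩
        refine ⟨⟨?_, hzT⟩, hzp⟩
        rintro rfl; simp [det3_self3'] at hzp
      · rintro ⟨⟨_, hzT⟩, hzp⟩; exact ⟨hzT, hzp⟩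
    have e3 : U.filter (fun y => ¬ 0 < det3 v x y) = U.filter (fun y => 0 < det3 x v y) := by
      apply filter_congr
      intro z hz
      have hzT : z ∈ T := mem_of_mem_erase hz
      have hzx : z ≠ x := (mem_erase.1 hz).1
      have hd : det3 v x z ≠ 0 := hnz x hx z hzT (Ne.symm hzx)
      have hsw : det3 x v z = - det3 v x z := det3_swap12 v x z
      constructor
      · intro h
        have : det3 v x z < 0 := lt_of_le_of_ne (not_lt.1 h) hd
        linarith
      · intro h
        intro h'
        linarith
    have hpart := card_filter_add_card_filter_not (s := U)
      (p := fun y => 0 < det3 v x y)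
    rw [e1, e2, ← e3]
    have hUcard : U.card = T.card - 1 := card_erase_of_mem hx
    have hTpos : 0 < T.card := card_pos.2 ⟨x, hx⟩
    omega
  · intro j hj
    have : j ∈ range T.card := mem_range.2 (by omega)
    rw [← himg] at this
    obtain ⟨x, hx, hxj⟩ := mem_image.1 this
    exact ⟨x, hx, hxj⟩

lemma det3_sum (a b : Pt) (t : Finset Pt) (w : Pt → ℝ) (hw : ∑ y ∈ t, w y = 1) :
    det3 a b (∑ y ∈ t, w y • y) = ∑ y ∈ t, w y * det3 a b y := by
  have h1 : (∑ y ∈ t, w y • y).1 = ∑ y ∈ t, w y * y.1 := by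
    rw [Prod.fst_sum]; simp [smul_eq_mul]
  have h2 : (∑ y ∈ t, w y • y).2 = ∑ y ∈ t, w y * y.2 := by
    rw [Prod.snd_sum]; simp [smul_eq_mul]
  have key : ∀ y : Pt, w y * det3 a b y =
      (-(b.2 - a.2)) * (w y * y.1) + (b.1 - a.1) * (w y * y.2)
        + ((b.2 - a.2) * a.1 - (b.1 - a.1) * a.2) * w y := by
    intro y; unfold det3; ring
  rw [Finset.sum_congr rfl (fun y _ => key y), Finset.sum_add_distrib,
    Finset.sum_add_distrib, ← Finset.mul_sum, ← Finset.mul_sum, ← Finset.mul_sum, hw,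
    ← h1, ← h2]
  unfold det3; ring

lemma hull_point_eq (a b : Pt) (t : Finset Pt) (c w0 : Pt) (hw0t : w0 ∈ t)
    (hc : det3 a b c = 0) (hneg : ∀ y ∈ t, y ≠ w0 → det3 a b y < 0)
    (hw0 : det3 a b w0 ≤ 0)
    (hmem : c ∈ convexHull ℝ (↑t : Set Pt)) : c = w0 := by
  rw [Finset.convexHull_eq] at hmem
  obtain ⟨w, hwpos, hwsum, hwc⟩ := hmem
  rw [Finset.centerMass_eq_of_sum_1 _ _ hwsum] at hwc
  simp only [id] at hwc
  have hsum0 : ∑ y ∈ t, w y * det3 a b y = 0 := by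
    rw [← det3_sum a b t w hwsum, hwc, hc]
  have hterm : ∀ y ∈ t, w y * det3 a b y ≤ 0 := by
    intro y hy
    rcases eq_or_ne y w0 with rfl | hne
    · exact mul_nonpos_of_nonneg_of_nonpos (hwpos y hy) hw0
    · exact mul_nonpos_of_nonneg_of_nonpos (hwpos y hy) (le_of_lt (hneg y hy hne))
  have hzero : ∀ y ∈ t, y ≠ w0 → w y = 0 := by
    intro y hy hne
    have := (Finset.sum_eq_zero_iff_of_nonpos hterm).1 hsum0 y hy
    rcases mul_eq_zero.1 this with h | h
    · exact h
    · exact absurd h (ne_of_lt (hneg y hy hne))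
  have hw1 : w w0 = 1 := by
    rw [← hwsum]
    exact (Finset.sum_eq_single_of_mem w0 hw0t (fun y hy hne => hzero y hy hne)).symm
  have : (∑ y ∈ t, w y • y) = w0 := by
    rw [Finset.sum_eq_single_of_mem w0 hw0t (fun y hy hne => by rw [hzero y hy hne, zero_smul]),
      hw1, one_smul]
  rw [this] at hwc
  exact hwc.symm

lemma zeroEdge_hullVertex (S : Finset Pt) (hgp : GenPos S) (a b : Pt)
    (ha : a ∈ S) (hb : b ∈ S) (hab : a ≠ b) (h0 : sideCount S a b = 0) :
    a ∈ hullVertices S ∧ b ∈ hullVertices S := by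
  have hneg : ∀ y ∈ S, det3 a b y ≤ 0 := by
    intro y hy
    by_contra h
    have hmem : y ∈ S.filter (fun x => 0 < det3 a b x) := mem_filter.2 ⟨hy, not_le.1 h⟩
    have := card_pos.2 ⟨y, hmem⟩
    rw [sideCount] at h0
    omega
  have hstrict : ∀ y ∈ S, y ≠ a → y ≠ b → det3 a b y < 0 := fun y hy hya hyb =>
    lt_of_le_of_ne (hneg y hy)
      (hgp a ha b hb y hy hab (Ne.symm hya) (Ne.symm hyb))
  constructor
  · refine mem_filter.2 ⟨ha, fun hmem => hab ?_⟩
    exact hull_point_eq a b (S.erase a) a b (mem_erase.2 ⟨Ne.symm hab, hb⟩)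
      (det3_self3' a b)
      (fun y hy hne => hstrict y (mem_of_mem_erase hy) (mem_erase.1 hy).1 hne)
      (le_of_eq (det3_self3 a b)) hmem
  · refine mem_filter.2 ⟨hb, fun hmem => (Ne.symm hab) ?_⟩
    exact hull_point_eq a b (S.erase b) b a (mem_erase.2 ⟨hab, ha⟩)
      (det3_self3 a b)
      (fun y hy hne => hstrict y (mem_of_mem_erase hy) hne (mem_erase.1 hy).1)
      (le_of_eq (det3_self3' a b)) hmem

lemma hullPairSC (S : Finset Pt) (hgp : GenPos S) (v u1 u2 : Pt)
    (hv : v ∈ hullVertices S) (hu1v : u1 ∈ hullVertices S) (hu2v : u2 ∈ hullVertices S)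
    (h12 : u1 ≠ u2) (hv1 : v ≠ u1) (hv2 : v ≠ u2)
    (hall : ∀ x ∈ hullVertices S, x = v ∨ x = u1 ∨ x = u2) :
    ∀ x ∈ S.erase v, ((sideCount S v x = 0 ∨ sideCount S x v = 0) ↔ (x = u1 ∨ x = u2)) := by
  obtain ⟨hsum, hinj, hsurj⟩ := vertexStruct S hgp v hv
  have hvS : v ∈ S := (mem_filter.1 hv).1
  have hu1S : u1 ∈ S := (mem_filter.1 hu1v).1
  have hu2S : u2 ∈ S := (mem_filter.1 hu2v).1
  have hn : 3 ≤ S.card := by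
    have hsub : ({v, u1, u2} : Finset Pt) ⊆ S := by
      rw [insert_subset_iff, insert_subset_iff, singleton_subset_iff]
      exact ⟨hvS, hu1S, hu2S⟩
    have hcard3 : ({v, u1, u2} : Finset Pt).card = 3 := by
      rw [card_insert_of_notMem (by simp [hv1, hv2]), card_insert_of_notMem (by simp [h12]),
        card_singleton]
    calc 3 = ({v, u1, u2} : Finset Pt).card := hcard3.symm
      _ ≤ S.card := card_le_card hsub
  obtain ⟨x0, hx0T, hx0⟩ := hsurj 0 (by omega)
  obtain ⟨x1, hx1T, hx1⟩ := hsurj (S.card - 2) (by omega)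
  have hx01 : x0 ≠ x1 := by
    intro h
    rw [h, hx1] at hx0
    omega
  have h0edge0 := zeroEdge_hullVertex S hgp v x0 hvS (mem_of_mem_erase hx0T)
    (Ne.symm (mem_erase.1 hx0T).1) hx0
  have hx1v0 : sideCount S x1 v = 0 := by
    have := hsum x1 hx1T; omega
  have h0edge1 := zeroEdge_hullVertex S hgp x1 v (mem_of_mem_erase hx1T) hvS
    ((mem_erase.1 hx1T).1) hx1v0
  have hx0mem : x0 = u1 ∨ x0 = u2 := by
    rcases hall x0 h0edge0.2 with h | h | h
    · exact absurd h (mem_erase.1 hx0T).1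
    · exact Or.inl h
    · exact Or.inr h
  have hx1mem : x1 = u1 ∨ x1 = u2 := by
    rcases hall x1 h0edge1.1 with h | h | h
    · exact absurd h (mem_erase.1 hx1T).1
    · exact Or.inl h
    · exact Or.inr h
  intro x hx
  constructor
  · rintro (h | h)
    · have hxx0 : x = x0 := hinj x hx x0 hx0T (by rw [h, hx0])
      rw [hxx0]; exact hx0mem
    · have hxn : sideCount S v x = S.card - 2 := by
        have := hsum x hx; omega
      have hxx1 : x = x1 := hinj x hx x1 hx1T (by rw [hxn, hx1])
      rw [hxx1]; exact hx1mem
  · intro hmem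
    have hx01' : x = x0 ∨ x = x1 := by
      rcases hx0mem with h0 | h0 <;> rcases hx1mem with h1 | h1
      · exact absurd (h0.trans h1.symm) hx01
      · rcases hmem with rfl | rfl
        · exact Or.inl h0.symm
        · exact Or.inr h1.symm
      · rcases hmem with rfl | rfl
        · exact Or.inr h1.symm
        · exact Or.inl h0.symm
      · exact absurd (h0.trans h1.symm) hx01
    rcases hx01' with h | h
    · left; rw [h]; exact hx0
    · right; rw [h]; exact hx1v0

lemma isJEdge_symm {S : Finset Pt} {j : ℕ} {a b : Pt} (h : IsJEdge S j a b) :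
    IsJEdge S j b a :=
  ⟨h.2.1, h.1, h.2.2.1.symm, h.2.2.2.symm⟩


/-- if the convex hull of `S` is the triangle `p q r`, then `S` has
exactly three `0`-edges and, for every `1 ≤ j < (n-2)/2`, exactly six `j`-edges
incident to `p`, `q` or `r`; hence for `1 ≤ k < (n-2)/2` there are exactly
`3 + 6k` `(≤k)`-edges incident to a convex hull vertex. -/
theorem statement9 (S : Finset Pt) (n : ℕ) (hcard : S.card = n) (hgp : GenPos S)
    (p q r : Pt) (hpq : p ≠ q) (hpr : p ≠ r) (hqr : q ≠ r)
    (hhull : hullVertices S = {p, q, r}) :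
    ej S 0 = 3 ∧ ejInc S {p, q, r} 0 = 3 ∧
    (∀ j : ℕ, 1 ≤ j → 2 * j + 2 < n → ejInc S {p, q, r} j = 6) ∧
    (∀ k : ℕ, 1 ≤ k → 2 * k + 2 < n →
      ∑ j ∈ Finset.range (k + 1), ejInc S {p, q, r} j = 3 + 6 * k) := by
  subst hcard
  have hp : p ∈ hullVertices S := by rw [hhull]; simp
  have hq : q ∈ hullVertices S := by rw [hhull]; simp
  have hr : r ∈ hullVertices S := by rw [hhull]; simp
  have hpS : p ∈ S := (mem_filter.1 hp).1
  have hqS : q ∈ S := (mem_filter.1 hq).1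
  have hrS : r ∈ S := (mem_filter.1 hr).1
  have mem_tri : ∀ z ∈ hullVertices S, z = p ∨ z = q ∨ z = r := by
    rw [hhull]; intro z hz; simpa using hz
  have hqTp : q ∈ S.erase p := mem_erase.2 ⟨Ne.symm hpq, hqS⟩
  have hrTp : r ∈ S.erase p := mem_erase.2 ⟨Ne.symm hpr, hrS⟩
  have hrTq : r ∈ S.erase q := mem_erase.2 ⟨Ne.symm hqr, hrS⟩
  have hp_pair := hullPairSC S hgp p q r hp hq hr hqr hpq hpr mem_tri
  have hq_pair := hullPairSC S hgp q p r hq hp hr hpr (Ne.symm hpq) hqr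
    (fun x hx => by rcases mem_tri x hx with h | h | h <;> tauto)
  have hr_pair := hullPairSC S hgp r p q hr hp hq hpq (Ne.symm hpr) (Ne.symm hqr)
    (fun x hx => by rcases mem_tri x hx with h | h | h <;> tauto)
  obtain ⟨hsum_p, hinj_p, hsurj_p⟩ := vertexStruct S hgp p hp
  obtain ⟨hsum_q, hinj_q, hsurj_q⟩ := vertexStruct S hgp q hq
  obtain ⟨hsum_r, hinj_r, hsurj_r⟩ := vertexStruct S hgp r hr
  -- part 1
  have pair_cases : ∀ a b : Pt, a ≠ b → (a = p ∨ a = q ∨ a = r) → (b = p ∨ b = q ∨ b = r) →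
      ({a, b} : Finset Pt) ∈ ({{p, q}, {p, r}, {q, r}} : Finset (Finset Pt)) := by
    intro a b hab ha hb
    rcases ha with rfl | rfl | rfl <;> rcases hb with rfl | rfl | rfl
    · exact absurd rfl hab
    · exact mem_insert_self _ _
    · exact mem_insert.2 (Or.inr (mem_insert_self _ _))
    · exact mem_insert.2 (Or.inl (Finset.pair_comm _ _))
    · exact absurd rfl hab
    · exact mem_insert.2 (Or.inr (mem_insert.2 (Or.inr (mem_singleton_self _))))
    · exact mem_insert.2 (Or.inr (mem_insert.2 (Or.inl (Finset.pair_comm _ _))))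
    · exact mem_insert.2 (Or.inr (mem_insert.2 (Or.inr (mem_singleton.2 (Finset.pair_comm _ _)))))
    · exact absurd rfl hab
  have hset0 : (S.powersetCard 2).filter (fun e => ∃ a b : Pt, e = {a, b} ∧ IsJEdge S 0 a b)
      = ({{p, q}, {p, r}, {q, r}} : Finset (Finset Pt)) := by
    ext e
    simp only [mem_filter, mem_powersetCard]
    constructor
    · rintro ⟨⟨hsub, hc2⟩, a, b, rfl, ha, hb, hab, h0 | h0⟩
      · obtain ⟨hva, hvb⟩ := zeroEdge_hullVertex S hgp a b ha hb hab h0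
        exact pair_cases a b hab (mem_tri a hva) (mem_tri b hvb)
      · obtain ⟨hvb, hva⟩ := zeroEdge_hullVertex S hgp b a hb ha hab.symm h0
        exact pair_cases a b hab (mem_tri a hva) (mem_tri b hvb)
    · intro he
      rcases mem_insert.1 he with rfl | he'
      · refine ⟨⟨?_, card_pair hpq⟩, p, q, rfl, hpS, hqS, hpq, (hp_pair q hqTp).2 (Or.inl rfl)⟩
        rw [insert_subset_iff, singleton_subset_iff]; exact ⟨hpS, hqS⟩
      rcases mem_insert.1 he' with rfl | he''
      · refine ⟨⟨?_, card_pair hpr⟩, p, r, rfl, hpS, hrS, hpr, (hp_pair r hrTp).2 (Or.inr rfl)⟩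
        rw [insert_subset_iff, singleton_subset_iff]; exact ⟨hpS, hrS⟩
      · rw [mem_singleton] at he''
        subst he''
        refine ⟨⟨?_, card_pair hqr⟩, q, r, rfl, hqS, hrS, hqr, (hq_pair r hrTq).2 (Or.inr rfl)⟩
        rw [insert_subset_iff, singleton_subset_iff]; exact ⟨hqS, hrS⟩
  have ne1 : ({p, q} : Finset Pt) ≠ {p, r} := by
    intro h
    have : (q : Pt) ∈ ({p, r} : Finset Pt) := by rw [← h]; simp
    rcases mem_insert.1 this with h' | h'
    · exact hpq h'.symm
    · exact hqr (mem_singleton.1 h')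
  have ne2 : ({p, q} : Finset Pt) ≠ {q, r} := by
    intro h
    have : (p : Pt) ∈ ({q, r} : Finset Pt) := by rw [← h]; simp
    rcases mem_insert.1 this with h' | h'
    · exact hpq h'
    · exact hpr (mem_singleton.1 h')
  have ne3 : ({p, r} : Finset Pt) ≠ {q, r} := by
    intro h
    have : (p : Pt) ∈ ({q, r} : Finset Pt) := by rw [← h]; simp
    rcases mem_insert.1 this with h' | h'
    · exact hpq h'
    · exact hpr (mem_singleton.1 h')
  have card3 : ({{p, q}, {p, r}, {q, r}} : Finset (Finset Pt)).card = 3 := by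
    rw [card_insert_of_notMem (by simp [ne1, ne2]), card_insert_of_notMem (by simp [ne3]),
      card_singleton]
  have part1 : ej S 0 = 3 := by
    unfold ej; rw [hset0]; exact card3
  have hset0' : (S.powersetCard 2).filter
      (fun e => (∃ a b : Pt, e = {a, b} ∧ IsJEdge S 0 a b) ∧
        (e ∩ ({p, q, r} : Finset Pt)).Nonempty)
      = ({{p, q}, {p, r}, {q, r}} : Finset (Finset Pt)) := by
    rw [← filter_filter, hset0]
    apply filter_true_of_mem
    intro e he
    rcases mem_insert.1 he with rfl | he'
    · exact ⟨p, mem_inter.2 ⟨mem_insert_self _ _, mem_insert_self _ _⟩⟩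
    rcases mem_insert.1 he' with rfl | he''
    · exact ⟨p, mem_inter.2 ⟨mem_insert_self _ _, mem_insert_self _ _⟩⟩
    · rw [mem_singleton] at he''; subst he''
      exact ⟨q, mem_inter.2 ⟨mem_insert_self _ _, by simp⟩⟩
  have part2 : ejInc S {p, q, r} 0 = 3 := by
    unfold ejInc; rw [hset0']; exact card3
  have pcross : ∀ v a w b : Pt, v ≠ w → (v = p ∨ v = q ∨ v = r) → ¬(b = p ∨ b = q ∨ b = r) →
      ({v, a} : Finset Pt) ≠ {w, b} := by
    intro v a w b hvw hv hb h
    have hmem : v ∈ ({w, b} : Finset Pt) := by rw [← h]; exact mem_insert_self _ _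
    rcases mem_insert.1 hmem with h' | h'
    · exact hvw h'
    · rw [mem_singleton] at h'; rw [h'] at hv; exact hb hv
  have psame : ∀ v a b : Pt, a ≠ b → v ≠ b → ({v, a} : Finset Pt) ≠ {v, b} := by
    intro v a b hab hvb h
    have hb' : b ∈ ({v, a} : Finset Pt) := by rw [h]; simp
    rcases mem_insert.1 hb' with h' | h'
    · exact hvb h'.symm
    · exact hab (mem_singleton.1 h').symm
  have part3 : ∀ j : ℕ, 1 ≤ j → 2 * j + 2 < S.card → ejInc S {p, q, r} j = 6 := by
    intro j hj1 hjn
    obtain ⟨xp, hxpT, hxp⟩ := hsurj_p j (by omega)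
    obtain ⟨yp, hypT, hyp⟩ := hsurj_p (S.card - 2 - j) (by omega)
    obtain ⟨xq, hxqT, hxq⟩ := hsurj_q j (by omega)
    obtain ⟨yq, hyqT, hyq⟩ := hsurj_q (S.card - 2 - j) (by omega)
    obtain ⟨xr, hxrT, hxr⟩ := hsurj_r j (by omega)
    obtain ⟨yr, hyrT, hyr⟩ := hsurj_r (S.card - 2 - j) (by omega)
    have hxyp : xp ≠ yp := fun h => by rw [h, hyp] at hxp; omega
    have hxyq : xq ≠ yq := fun h => by rw [h, hyq] at hxq; omega
    have hxyr : xr ≠ yr := fun h => by rw [h, hyr] at hxr; omega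
    have hxp_tri : ¬(xp = p ∨ xp = q ∨ xp = r) := by
      rintro (h | h)
      · exact (mem_erase.1 hxpT).1 h
      · rcases (hp_pair xp hxpT).2 h with h0 | h0
        · omega
        · have := hsum_p xp hxpT; omega
    have hyp_tri : ¬(yp = p ∨ yp = q ∨ yp = r) := by
      rintro (h | h)
      · exact (mem_erase.1 hypT).1 h
      · rcases (hp_pair yp hypT).2 h with h0 | h0
        · omega
        · have := hsum_p yp hypT; omega
    have hxq_tri : ¬(xq = p ∨ xq = q ∨ xq = r) := by
      rintro (h | h)
      · rcases (hq_pair xq hxqT).2 (Or.inl h) with h0 | h0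
        · omega
        · have := hsum_q xq hxqT; omega
      · rcases h with h | h
        · exact (mem_erase.1 hxqT).1 h
        · rcases (hq_pair xq hxqT).2 (Or.inr h) with h0 | h0
          · omega
          · have := hsum_q xq hxqT; omega
    have hyq_tri : ¬(yq = p ∨ yq = q ∨ yq = r) := by
      rintro (h | h)
      · rcases (hq_pair yq hyqT).2 (Or.inl h) with h0 | h0
        · omega
        · have := hsum_q yq hyqT; omega
      · rcases h with h | h
        · exact (mem_erase.1 hyqT).1 h
        · rcases (hq_pair yq hyqT).2 (Or.inr h) with h0 | h0
          · omega
          · have := hsum_q yq hyqT; omega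
    have hxr_tri : ¬(xr = p ∨ xr = q ∨ xr = r) := by
      rintro (h | h | h)
      · rcases (hr_pair xr hxrT).2 (Or.inl h) with h0 | h0
        · omega
        · have := hsum_r xr hxrT; omega
      · rcases (hr_pair xr hxrT).2 (Or.inr h) with h0 | h0
        · omega
        · have := hsum_r xr hxrT; omega
      · exact (mem_erase.1 hxrT).1 h
    have hyr_tri : ¬(yr = p ∨ yr = q ∨ yr = r) := by
      rintro (h | h | h)
      · rcases (hr_pair yr hyrT).2 (Or.inl h) with h0 | h0
        · omega
        · have := hsum_r yr hyrT; omega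
      · rcases (hr_pair yr hyrT).2 (Or.inr h) with h0 | h0
        · omega
        · have := hsum_r yr hyrT; omega
      · exact (mem_erase.1 hyrT).1 h
    set E6 : Finset (Finset Pt) :=
      {{p, xp}, {p, yp}, {q, xq}, {q, yq}, {r, xr}, {r, yr}} with hE6
    have step : ∀ v w : Pt, (v = p ∨ v = q ∨ v = r) → IsJEdge S j v w →
        ({v, w} : Finset Pt) ∈ E6 := by
      rintro v w hv ⟨hvS', hwS, hvw, hor⟩
      have hwT : w ∈ S.erase v := mem_erase.2 ⟨Ne.symm hvw, hwS⟩
      rcases hv with rfl | rfl | rfl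
      · have hsum := hsum_p w hwT
        have hcase : sideCount S v w = j ∨ sideCount S v w = S.card - 2 - j := by
          rcases hor with h | h
          · exact Or.inl h
          · right; omega
        rcases hcase with h | h
        · have hw : w = xp := hinj_p w hwT xp hxpT (by rw [h, hxp])
          rw [hw]; simp [hE6]
        · have hw : w = yp := hinj_p w hwT yp hypT (by rw [h, hyp])
          rw [hw]; simp [hE6]
      · have hsum := hsum_q w hwT
        have hcase : sideCount S v w = j ∨ sideCount S v w = S.card - 2 - j := by
          rcases hor with h | h
          · exact Or.inl h
          · right; omega
        rcases hcase with h | h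
        · have hw : w = xq := hinj_q w hwT xq hxqT (by rw [h, hxq])
          rw [hw]; simp [hE6]
        · have hw : w = yq := hinj_q w hwT yq hyqT (by rw [h, hyq])
          rw [hw]; simp [hE6]
      · have hsum := hsum_r w hwT
        have hcase : sideCount S v w = j ∨ sideCount S v w = S.card - 2 - j := by
          rcases hor with h | h
          · exact Or.inl h
          · right; omega
        rcases hcase with h | h
        · have hw : w = xr := hinj_r w hwT xr hxrT (by rw [h, hxr])
          rw [hw]; simp [hE6]
        · have hw : w = yr := hinj_r w hwT yr hyrT (by rw [h, hyr])
          rw [hw]; simp [hE6]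
    have hset6 : (S.powersetCard 2).filter
        (fun e => (∃ a b : Pt, e = {a, b} ∧ IsJEdge S j a b) ∧
          (e ∩ ({p, q, r} : Finset Pt)).Nonempty) = E6 := by
      ext e
      simp only [mem_filter, mem_powersetCard]
      constructor
      · rintro ⟨⟨hsub, hc2⟩, ⟨a, b, rfl, hedge⟩, hne⟩
        obtain ⟨z, hz⟩ := hne
        rw [mem_inter] at hz
        have hz3 : z = p ∨ z = q ∨ z = r := by simpa using hz.2
        rcases mem_insert.1 hz.1 with rfl | hz1
        · exact step z b hz3 hedge
        · rw [mem_singleton] at hz1; subst hz1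
          rw [Finset.pair_comm]
          exact step _ a hz3 (isJEdge_symm hedge)
      · intro he
        rw [hE6] at he
        simp only [mem_insert, mem_singleton] at he
        have hyp' : sideCount S yp p = j := by have := hsum_p yp hypT; omega
        have hyq' : sideCount S yq q = j := by have := hsum_q yq hyqT; omega
        have hyr' : sideCount S yr r = j := by have := hsum_r yr hyrT; omega
        rcases he with rfl | rfl | rfl | rfl | rfl | rfl
        · exact ⟨⟨(by rw [insert_subset_iff, singleton_subset_iff]; exact ⟨hpS, mem_of_mem_erase hxpT⟩), card_pair (Ne.symm (mem_erase.1 hxpT).1)⟩,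
            ⟨p, xp, rfl, hpS, mem_of_mem_erase hxpT, Ne.symm (mem_erase.1 hxpT).1, Or.inl hxp⟩,
            ⟨p, mem_inter.2 ⟨mem_insert_self _ _, by simp⟩⟩⟩
        · exact ⟨⟨(by rw [insert_subset_iff, singleton_subset_iff]; exact ⟨hpS, mem_of_mem_erase hypT⟩), card_pair (Ne.symm (mem_erase.1 hypT).1)⟩,
            ⟨p, yp, rfl, hpS, mem_of_mem_erase hypT, Ne.symm (mem_erase.1 hypT).1, Or.inr hyp'⟩,
            ⟨p, mem_inter.2 ⟨mem_insert_self _ _, by simp⟩⟩⟩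
        · exact ⟨⟨(by rw [insert_subset_iff, singleton_subset_iff]; exact ⟨hqS, mem_of_mem_erase hxqT⟩), card_pair (Ne.symm (mem_erase.1 hxqT).1)⟩,
            ⟨q, xq, rfl, hqS, mem_of_mem_erase hxqT, Ne.symm (mem_erase.1 hxqT).1, Or.inl hxq⟩,
            ⟨q, mem_inter.2 ⟨mem_insert_self _ _, by simp⟩⟩⟩
        · exact ⟨⟨(by rw [insert_subset_iff, singleton_subset_iff]; exact ⟨hqS, mem_of_mem_erase hyqT⟩), card_pair (Ne.symm (mem_erase.1 hyqT).1)⟩,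
            ⟨q, yq, rfl, hqS, mem_of_mem_erase hyqT, Ne.symm (mem_erase.1 hyqT).1, Or.inr hyq'⟩,
            ⟨q, mem_inter.2 ⟨mem_insert_self _ _, by simp⟩⟩⟩
        · exact ⟨⟨(by rw [insert_subset_iff, singleton_subset_iff]; exact ⟨hrS, mem_of_mem_erase hxrT⟩), card_pair (Ne.symm (mem_erase.1 hxrT).1)⟩,
            ⟨r, xr, rfl, hrS, mem_of_mem_erase hxrT, Ne.symm (mem_erase.1 hxrT).1, Or.inl hxr⟩,
            ⟨r, mem_inter.2 ⟨mem_insert_self _ _, by simp⟩⟩⟩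
        · exact ⟨⟨(by rw [insert_subset_iff, singleton_subset_iff]; exact ⟨hrS, mem_of_mem_erase hyrT⟩), card_pair (Ne.symm (mem_erase.1 hyrT).1)⟩,
            ⟨r, yr, rfl, hrS, mem_of_mem_erase hyrT, Ne.symm (mem_erase.1 hyrT).1, Or.inr hyr'⟩,
            ⟨r, mem_inter.2 ⟨mem_insert_self _ _, by simp⟩⟩⟩
    have hpyp : p ≠ yp := Ne.symm (mem_erase.1 hypT).1
    have hqyq : q ≠ yq := Ne.symm (mem_erase.1 hyqT).1
    have hryr : r ≠ yr := Ne.symm (mem_erase.1 hyrT).1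
    have card6 : E6.card = 6 := by
      rw [hE6]
      rw [card_insert_of_notMem (by
          simp only [mem_insert, mem_singleton]; push_neg
          exact ⟨psame p xp yp hxyp hpyp, pcross p xp q xq hpq (Or.inl rfl) hxq_tri,
            pcross p xp q yq hpq (Or.inl rfl) hyq_tri, pcross p xp r xr hpr (Or.inl rfl) hxr_tri,
            pcross p xp r yr hpr (Or.inl rfl) hyr_tri⟩),
        card_insert_of_notMem (by
          simp only [mem_insert, mem_singleton]; push_neg
          exact ⟨pcross p yp q xq hpq (Or.inl rfl) hxq_tri,
            pcross p yp q yq hpq (Or.inl rfl) hyq_tri, pcross p yp r xr hpr (Or.inl rfl) hxr_tri,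
            pcross p yp r yr hpr (Or.inl rfl) hyr_tri⟩),
        card_insert_of_notMem (by
          simp only [mem_insert, mem_singleton]; push_neg
          exact ⟨psame q xq yq hxyq hqyq,
            pcross q xq r xr hqr (Or.inr (Or.inl rfl)) hxr_tri,
            pcross q xq r yr hqr (Or.inr (Or.inl rfl)) hyr_tri⟩),
        card_insert_of_notMem (by
          simp only [mem_insert, mem_singleton]; push_neg
          exact ⟨pcross q yq r xr hqr (Or.inr (Or.inl rfl)) hxr_tri,
            pcross q yq r yr hqr (Or.inr (Or.inl rfl)) hyr_tri⟩),
        card_insert_of_notMem (by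
          simp only [mem_singleton]
          exact psame r xr yr hxyr hryr),
        card_singleton]
    unfold ejInc
    rw [hset6]
    exact card6
  refine ⟨part1, part2, part3, ?_⟩
  intro k hk1 hkn
  rw [Finset.sum_range_succ']
  rw [Finset.sum_congr rfl
    (fun i hi => part3 (i + 1) (by omega) (by have := mem_range.1 hi; omega)),
    Finset.sum_const, card_range, part2]
  simp only [smul_eq_mul]
  omega
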